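/- Let n ≥ 2, c > 0, and let λ_1 > … > λ_n be real numbers with λ_k − λ_{k+1} = c and λ_k = −λ_{n+1−k} for all k. Let d_1, …, d_n be positive integers with d_k ≤ d_{k+1} for 1 ≤ k ≤ ⌊n/2⌋ and d_k = d_{n+1−k} for all k (set d_0 := 0). For 1 ≤ k ≤ n−1 define the d_{k+1} × d_k matrix D_k whose (p,p) entry, for 1 ≤ p ≤ d_k, is √( (c/2)·Σ_{i=j(p)}^{k} λ_i ), where j(p) := min{ j : d_j ≥ p }, and whose other entries are zero. Then every partial sum Σ_{i=j(p)}^{k} λ_i appearing under a square root is nonnegative, and with the convention D_0 = 0 and D_n = 0 these matrices satisfy the recurrence D_k† D_k − D_{k−1} D_{k−1}† = (c λ_k / 2)·I_{d_k} for every 1 ≤ k ≤ n. -/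

import Mathlib

open Matrix

/-- The index `j(p) = min { j : d j ≥ p }` (with `p` one-based). -/
noncomputable def firstBigEnough (d : ℕ → ℕ) (p : ℕ) : ℕ := sInf {j : ℕ | p ≤ d j}

/-- The `d (k+1) × d k` matrix `D_k` whose `(p,p)` entry for `1 ≤ p ≤ d k` is
`√((c/2) · Σ_{i = j(p)}^{k} λ i)` and whose other entries vanish; by convention `D_k = 0`
unless `1 ≤ k ≤ n - 1`. -/
noncomputable def Dmat (n : ℕ) (c : ℝ) (lam : ℕ → ℝ) (d : ℕ → ℕ) (k : ℕ) :
    Matrix (Fin (d (k + 1))) (Fin (d k)) ℂ :=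
  Matrix.of fun p q =>
    if 1 ≤ k ∧ k ≤ n - 1 ∧ (p : ℕ) = (q : ℕ) then
      ((Real.sqrt ((c / 2) * ∑ i ∈ Finset.Icc (firstBigEnough d ((q : ℕ) + 1)) k, lam i) : ℝ) : ℂ)
    else 0

private lemma d_chain (n : ℕ) (d : ℕ → ℕ)
    (hmono : ∀ k, 1 ≤ k → k ≤ n / 2 → d k ≤ d (k + 1)) :
    ∀ a b, 1 ≤ a → a ≤ b → b ≤ n / 2 + 1 → d a ≤ d b := by
  intro a b ha hab hb
  induction b with
  | zero => omega
  | succ b ih =>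
    rcases Nat.lt_or_ge a (b + 1) with h | h
    · exact le_trans (ih (by omega) (by omega)) (hmono b (by omega) (by omega))
    · have : a = b + 1 := by omega
      rw [this]

private lemma lam_eq (n : ℕ) (hn : 2 ≤ n) (c : ℝ) (lam : ℕ → ℝ)
    (hgap : ∀ k, 1 ≤ k → k ≤ n - 1 → lam k - lam (k + 1) = c)
    (hsym : ∀ k, 1 ≤ k → k ≤ n → lam k = -lam (n + 1 - k)) :
    ∀ k, 1 ≤ k → k ≤ n → lam k = c * ((n : ℝ) + 1 - 2 * k) / 2 := by
  have hstep : ∀ k, 1 ≤ k → k ≤ n → lam k = lam 1 - ((k : ℝ) - 1) * c := by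
    intro k hk1
    induction k, hk1 using Nat.le_induction with
    | base => intro _; push_cast; ring
    | succ k hk ih =>
      intro hkn
      have h1 : lam k - lam (k + 1) = c := hgap k hk (by omega)
      have h2 := ih (by omega)
      push_cast
      linarith
  have h1n : lam 1 = -lam n := by
    have := hsym 1 le_rfl (by omega)
    simpa using this
  have hval1 : lam 1 = ((n : ℝ) - 1) * c / 2 := by
    have h := hstep n (by omega) le_rfl
    rw [h] at h1n
    linarith
  intro k hk1 hkn
  rw [hstep k hk1 hkn, hval1]
  ring

private lemma sum_lam (n : ℕ) (c : ℝ) (lam : ℕ → ℝ)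
    (hlam : ∀ k, 1 ≤ k → k ≤ n → lam k = c * ((n : ℝ) + 1 - 2 * k) / 2) :
    ∀ (j k : ℕ), 1 ≤ j → j ≤ k → k ≤ n →
      ∑ i ∈ Finset.Icc j k, lam i
        = c * ((k : ℝ) - j + 1) * ((n : ℝ) + 1 - j - k) / 2 := by
  intro j k h1 hjk
  induction k, hjk using Nat.le_induction with
  | base =>
    intro h
    rw [Finset.Icc_self, Finset.sum_singleton, hlam j h1 h]
    ring
  | succ k hk ih =>
    intro h
    rw [Finset.sum_Icc_succ_top (by omega), ih (by omega),
      hlam (k + 1) (by omega) h]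
    push_cast; ring

private lemma fbe_char (n : ℕ) (d : ℕ → ℕ)
    (hd0 : d 0 = 0)
    (hmono : ∀ k, 1 ≤ k → k ≤ n / 2 → d k ≤ d (k + 1))
    (hdsym : ∀ k, 1 ≤ k → k ≤ n → d k = d (n + 1 - k)) :
    ∀ p : ℕ, 1 ≤ p → ∀ w, 1 ≤ w → w ≤ n → p ≤ d w →
      (1 ≤ firstBigEnough d p ∧ p ≤ d (firstBigEnough d p) ∧
        ∀ m, 1 ≤ m → m ≤ n →
          (p ≤ d m ↔ firstBigEnough d p ≤ m ∧ m + firstBigEnough d p ≤ n + 1)) := by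
  have hchain := d_chain n d hmono
  intro p hp w hw1 hwn hpw
  have hne : {i : ℕ | p ≤ d i}.Nonempty := ⟨w, hpw⟩
  have hjmem : p ≤ d (firstBigEnough d p) := Nat.sInf_mem hne
  have hle : ∀ m, p ≤ d m → firstBigEnough d p ≤ m := fun m hm => Nat.sInf_le hm
  set j := firstBigEnough d p with hjdef
  have hj1 : 1 ≤ j := by
    by_contra h
    have hj0 : j = 0 := by omega
    rw [hj0, hd0] at hjmem
    omega
  refine ⟨hj1, hjmem, ?_⟩
  intro m hm1 hmn
  constructor
  · intro hpm
    have h1 : j ≤ m := hle m hpm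
    have h2 : j ≤ n + 1 - m := by
      apply hle
      rw [← hdsym m hm1 hmn]
      exact hpm
    omega
  · rintro ⟨h1, h2⟩
    by_cases hcmp : m ≤ n + 1 - m
    · have := hchain j m hj1 h1 (by omega)
      omega
    · have hm' : d m = d (n + 1 - m) := hdsym m hm1 hmn
      have := hchain j (n + 1 - m) hj1 (by omega) (by omega)
      omega

theorem Dmat_recurrence
    (n : ℕ) (hn : 2 ≤ n) (c : ℝ) (hc : 0 < c) (lam : ℕ → ℝ) (d : ℕ → ℕ)
    (hgap : ∀ k, 1 ≤ k → k ≤ n - 1 → lam k - lam (k + 1) = c)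
    (hsym : ∀ k, 1 ≤ k → k ≤ n → lam k = -lam (n + 1 - k))
    (hd0 : d 0 = 0)
    (hdpos : ∀ k, 1 ≤ k → k ≤ n → 0 < d k)
    (hmono : ∀ k, 1 ≤ k → k ≤ n / 2 → d k ≤ d (k + 1))
    (hdsym : ∀ k, 1 ≤ k → k ≤ n → d k = d (n + 1 - k)) :
    (∀ k, 1 ≤ k → k ≤ n - 1 → ∀ q : Fin (d k),
      0 ≤ ∑ i ∈ Finset.Icc (firstBigEnough d ((q : ℕ) + 1)) k, lam i) ∧
    (∀ k : ℕ, k + 1 ≤ n →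
      (Dmat n c lam d (k + 1))ᴴ * Dmat n c lam d (k + 1) -
        Dmat n c lam d k * (Dmat n c lam d k)ᴴ =
      ((c * lam (k + 1) / 2 : ℝ) : ℂ) • 1) := by
  have hlam := lam_eq n hn c lam hgap hsym
  have hsum := sum_lam n c lam hlam
  have hchar := fbe_char n d hd0 hmono hdsym
  -- Part 1: nonnegativity
  have hnonneg : ∀ k, 1 ≤ k → k ≤ n - 1 → ∀ q : Fin (d k),
      0 ≤ ∑ i ∈ Finset.Icc (firstBigEnough d ((q : ℕ) + 1)) k, lam i := by
    intro k hk1 hkn q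
    obtain ⟨hj1, hjmem, hiff⟩ :=
      hchar ((q : ℕ) + 1) (by omega) k hk1 (by omega) q.isLt
    obtain ⟨hjk, hkj⟩ := (hiff k hk1 (by omega)).mp q.isLt
    rw [hsum (firstBigEnough d ((q : ℕ) + 1)) k hj1 hjk (by omega)]
    have h1 : (0:ℝ) ≤ (k : ℝ) - (firstBigEnough d ((q : ℕ) + 1) : ℝ) + 1 := by
      have : ((firstBigEnough d ((q : ℕ) + 1) : ℕ) : ℝ) ≤ (k : ℝ) := by exact_mod_cast hjk
      linarith
    have h2 : (0:ℝ) ≤ (n : ℝ) + 1 - (firstBigEnough d ((q : ℕ) + 1) : ℝ) - (k : ℝ) := by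
      have : (k : ℝ) + (firstBigEnough d ((q : ℕ) + 1) : ℝ) ≤ (n : ℝ) + 1 := by
        exact_mod_cast hkj
      linarith
    have := mul_nonneg (mul_nonneg hc.le h1) h2
    linarith
  refine ⟨hnonneg, ?_⟩
  intro k hkn
  -- entry formula for Dᴴ * D
  have key1 : ∀ q r : Fin (d (k + 1)),
      ((Dmat n c lam d (k + 1))ᴴ * Dmat n c lam d (k + 1)) q r
        = if (q : ℕ) = (r : ℕ) ∧ k + 1 ≤ n - 1 ∧ (q : ℕ) < d (k + 1 + 1) then
            ((c / 2 * ∑ i ∈ Finset.Icc (firstBigEnough d ((q : ℕ) + 1)) (k + 1), lam i : ℝ) : ℂ)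
          else 0 := by
    intro q r
    rw [Matrix.mul_apply]
    by_cases hq2 : (q : ℕ) < d (k + 1 + 1)
    · rw [Finset.sum_eq_single (⟨(q : ℕ), hq2⟩ : Fin (d (k + 1 + 1)))]
      · rw [Matrix.conjTranspose_apply]
        simp only [Dmat, Matrix.of_apply]
        by_cases hB : k + 1 ≤ n - 1
        · by_cases hqr : (q : ℕ) = (r : ℕ)
          · rw [if_pos ⟨by omega, hB, trivial⟩, if_pos ⟨by omega, hB, hqr⟩,
              if_pos ⟨hqr, hB, hq2⟩, ← hqr]
            have hnn : 0 ≤ c / 2 * ∑ i ∈ Finset.Icc (firstBigEnough d ((q : ℕ) + 1)) (k + 1), lam i :=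
              mul_nonneg (by linarith) (hnonneg (k + 1) (by omega) hB q)
            rw [Complex.star_def, Complex.conj_ofReal, ← Complex.ofReal_mul,
              Real.mul_self_sqrt hnn]
          · rw [if_neg (show ¬(1 ≤ k + 1 ∧ k + 1 ≤ n - 1 ∧ (q : ℕ) = (r : ℕ)) from
                fun h => hqr h.2.2), mul_zero,
              if_neg (show ¬((q : ℕ) = (r : ℕ) ∧ k + 1 ≤ n - 1 ∧ (q : ℕ) < d (k + 1 + 1)) from
                fun h => hqr h.1)]
        · rw [if_neg (show ¬(1 ≤ k + 1 ∧ k + 1 ≤ n - 1 ∧ True) from fun h => hB h.2.1),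
            star_zero, zero_mul,
            if_neg (show ¬((q : ℕ) = (r : ℕ) ∧ k + 1 ≤ n - 1 ∧ (q : ℕ) < d (k + 1 + 1)) from
              fun h => hB h.2.1)]
      · intro p _ hp
        have hpq : (p : ℕ) ≠ (q : ℕ) := fun h => hp (Fin.ext h)
        simp only [Dmat, Matrix.of_apply, Matrix.conjTranspose_apply]
        rw [if_neg (fun h => hpq h.2.2), star_zero, zero_mul]
      · intro h
        exact absurd (Finset.mem_univ _) h
    · rw [if_neg (fun h => hq2 h.2.2)]
      refine Finset.sum_eq_zero fun p _ => ?_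
      simp only [Dmat, Matrix.of_apply, Matrix.conjTranspose_apply]
      rw [if_neg, star_zero, zero_mul]
      rintro ⟨-, -, h⟩
      exact hq2 (h ▸ p.isLt)
  -- entry formula for D * Dᴴ
  have key2 : ∀ q r : Fin (d (k + 1)),
      (Dmat n c lam d k * (Dmat n c lam d k)ᴴ) q r
        = if (q : ℕ) = (r : ℕ) ∧ 1 ≤ k ∧ k ≤ n - 1 ∧ (q : ℕ) < d k then
            ((c / 2 * ∑ i ∈ Finset.Icc (firstBigEnough d ((q : ℕ) + 1)) k, lam i : ℝ) : ℂ)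
          else 0 := by
    intro q r
    rw [Matrix.mul_apply]
    by_cases hqk : (q : ℕ) < d k
    · rw [Finset.sum_eq_single (⟨(q : ℕ), hqk⟩ : Fin (d k))]
      · rw [Matrix.conjTranspose_apply]
        simp only [Dmat, Matrix.of_apply]
        by_cases hB : 1 ≤ k ∧ k ≤ n - 1
        · by_cases hqr : (q : ℕ) = (r : ℕ)
          · rw [if_pos ⟨hB.1, hB.2, trivial⟩, if_pos ⟨hB.1, hB.2, hqr.symm⟩,
              if_pos ⟨hqr, hB.1, hB.2, hqk⟩]
            have hnn : 0 ≤ c / 2 * ∑ i ∈ Finset.Icc (firstBigEnough d ((q : ℕ) + 1)) k, lam i :=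
              mul_nonneg (by linarith) (hnonneg k hB.1 hB.2 ⟨(q : ℕ), hqk⟩)
            rw [Complex.star_def, Complex.conj_ofReal, ← Complex.ofReal_mul,
              Real.mul_self_sqrt hnn]
          · rw [if_neg (show ¬(1 ≤ k ∧ k ≤ n - 1 ∧ (r : ℕ) = (q : ℕ)) from
                fun h => hqr h.2.2.symm), star_zero, mul_zero,
              if_neg (show ¬((q : ℕ) = (r : ℕ) ∧ 1 ≤ k ∧ k ≤ n - 1 ∧ (q : ℕ) < d k) from
                fun h => hqr h.1)]
        · rw [if_neg (show ¬(1 ≤ k ∧ k ≤ n - 1 ∧ True) from fun h => hB ⟨h.1, h.2.1⟩),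
            zero_mul,
            if_neg (show ¬((q : ℕ) = (r : ℕ) ∧ 1 ≤ k ∧ k ≤ n - 1 ∧ (q : ℕ) < d k) from
              fun h => hB ⟨h.2.1, h.2.2.1⟩)]
      · intro s _ hs
        have hsq : (q : ℕ) ≠ (s : ℕ) := fun h => hs (Fin.ext h.symm)
        simp only [Dmat, Matrix.of_apply, Matrix.conjTranspose_apply]
        rw [if_neg (fun h => hsq h.2.2), zero_mul]
      · intro h
        exact absurd (Finset.mem_univ _) h
    · rw [if_neg (fun h => hqk h.2.2.2)]
      refine Finset.sum_eq_zero fun s _ => ?_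
      simp only [Dmat, Matrix.of_apply, Matrix.conjTranspose_apply]
      rw [if_neg, zero_mul]
      rintro ⟨-, -, h⟩
      exact hqk (h ▸ s.isLt)
  ext q r
  rw [Matrix.sub_apply, key1 q r, key2 q r, Matrix.smul_apply, Matrix.one_apply]
  by_cases hqr : (q : ℕ) = (r : ℕ)
  · have hqr' : q = r := Fin.ext hqr
    rw [if_pos hqr', smul_eq_mul, mul_one]
    obtain ⟨hj1, hjmem, hiff⟩ :=
      hchar ((q : ℕ) + 1) (by omega) (k + 1) (by omega) hkn q.isLt
    set j := firstBigEnough d ((q : ℕ) + 1) with hjdef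
    obtain ⟨hjk1, hk1j⟩ := (hiff (k + 1) (by omega) hkn).mp q.isLt
    by_cases hC1 : k + 1 ≤ n - 1 ∧ (q : ℕ) < d (k + 1 + 1)
    · by_cases hC2 : 1 ≤ k ∧ k ≤ n - 1 ∧ (q : ℕ) < d k
      · -- both terms present
        rw [if_pos ⟨hqr, hC1⟩, if_pos ⟨hqr, hC2⟩]
        have hjk : j ≤ k := ((hiff k hC2.1 (by omega)).mp hC2.2.2).1
        rw [hsum j (k + 1) hj1 hjk1 (by omega), hsum j k hj1 hjk (by omega),
          hlam (k + 1) (by omega) hkn]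
        push_cast
        ring
      · -- right term absent: j = k + 1
        have hj : j = k + 1 := by
          rcases Nat.eq_zero_or_pos k with hk0 | hk0
          · omega
          · have hiffk := hiff k hk0 (by omega)
            have hdk : ¬((q : ℕ) < d k) := fun h => hC2 ⟨hk0, by omega, h⟩
            omega
        rw [if_pos ⟨hqr, hC1⟩, if_neg (fun h => hC2 h.2), hj,
          hsum (k + 1) (k + 1) (by omega) le_rfl hkn, hlam (k + 1) (by omega) hkn]
        push_cast
        ring
    · by_cases hC2 : 1 ≤ k ∧ k ≤ n - 1 ∧ (q : ℕ) < d k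
      · -- left term absent, right present
        rw [if_neg (fun h => hC1 h.2), if_pos ⟨hqr, hC2⟩]
        have hjk : j ≤ k := ((hiff k hC2.1 (by omega)).mp hC2.2.2).1
        rw [hsum j k hj1 hjk (by omega), hlam (k + 1) (by omega) hkn]
        by_cases hkn1 : k + 1 ≤ n - 1
        · -- then q must overflow d (k+2), so j + k = n
          have hiff2 := hiff (k + 1 + 1) (by omega) (by omega)
          have hd2 : ¬((q : ℕ) < d (k + 1 + 1)) := fun h => hC1 ⟨hkn1, h⟩
          have hjkn : j + k = n := by omega
          have hnr : (n : ℝ) = (j : ℝ) + (k : ℝ) := by exact_mod_cast hjkn.symm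
          rw [hnr]
          push_cast
          ring
        · -- k + 1 = n
          have hkeq : k + 1 = n := by omega
          have hd1n : d 1 = d (k + 1) := by
            have h1 := hdsym 1 le_rfl (by omega)
            rw [h1]
            congr 1
            omega
          have hd1 : (q : ℕ) + 1 ≤ d 1 := by
            have := q.isLt
            omega
          have hjeq : j = 1 := by
            have := (hiff 1 le_rfl (by omega)).mp hd1
            omega
          have hnr : (n : ℝ) = (k : ℝ) + 1 := by exact_mod_cast hkeq.symm
          rw [hjeq, hnr]
          push_cast
          ring
      · -- both absent: n = 2k + 1 and lam (k+1) = 0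
        rw [if_neg (fun h => hC1 h.2), if_neg (fun h => hC2 h.2)]
        have hj : j = k + 1 := by
          rcases Nat.eq_zero_or_pos k with hk0 | hk0
          · omega
          · have hiffk := hiff k hk0 (by omega)
            have hdk : ¬((q : ℕ) < d k) := fun h => hC2 ⟨hk0, by omega, h⟩
            omega
        have hn2 : n = 2 * k + 1 := by
          by_cases hkn1 : k + 1 ≤ n - 1
          · have hiff2 := hiff (k + 1 + 1) (by omega) (by omega)
            have hd2 : ¬((q : ℕ) < d (k + 1 + 1)) := fun h => hC1 ⟨hkn1, h⟩
            omega
          · have hkeq : k + 1 = n := by omega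
            have hd1n : d 1 = d (k + 1) := by
              have h1 := hdsym 1 le_rfl (by omega)
              rw [h1]
              congr 1
              omega
            have hd1 : (q : ℕ) + 1 ≤ d 1 := by
              have := q.isLt
              omega
            have := (hiff 1 le_rfl (by omega)).mp hd1
            omega
        rw [hlam (k + 1) (by omega) hkn]
        have hnr : (n : ℝ) = 2 * (k : ℝ) + 1 := by exact_mod_cast hn2
        rw [hnr]
        push_cast
        ring
  · have hqr' : q ≠ r := fun h => hqr (congrArg Fin.val h)
    rw [if_neg hqr', smul_zero, if_neg (fun h => hqr h.1), if_neg (fun h => hqr h.1), sub_zero]
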